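/- Let F be a finite family of finite sets and A ∈ F a member set containing an element of frequency 1, such that every S ∈ F with S ∩ A ≠ ∅ contains an element of frequency 1 (in F). Then every element of A is abundant in ⟨F⟩: it lies in at least half of the members of the union-closed family generated by F. -/

import Mathlib

/-- The union-closed family generated by `F`: all unions of subfamilies of `F`
(including the empty union `∅`). -/
def genFam {α : Type*} [DecidableEq α] (F : Finset (Finset α)) : Set (Finset α) :=
  {A : Finset α | ∃ F' ⊆ F, A = F'.sup id}

theorem stmt_17 {α : Type*} [DecidableEq α] (F : Finset (Finset α)) (A : Finset α)
    (hA : A ∈ F) (hA1 : ∃ x ∈ A, (F.filter (fun T => x ∈ T)).card = 1)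
    (hfreq : ∀ S ∈ F, (S ∩ A).Nonempty → ∃ x ∈ S, (F.filter (fun T => x ∈ T)).card = 1) :
    ∀ a ∈ A, Set.ncard (genFam F) ≤ 2 * Set.ncard {B ∈ genFam F | a ∈ B} := by
  classical
  intro a ha
  set G : Finset (Finset α) := F.powerset.image (fun F' => F'.sup id) with hG
  have hGmem : ∀ B, B ∈ G ↔ ∃ F' ⊆ F, B = F'.sup id := by
    intro B
    simp only [hG, Finset.mem_image, Finset.mem_powerset]
    constructor
    · rintro ⟨F', h1, h2⟩; exact ⟨F', h1, h2.symm⟩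
    · rintro ⟨F', h1, h2⟩; exact ⟨F', h1, h2.symm⟩
  have hgen : genFam F = ↑G := by
    ext B; simp [genFam, hGmem]
  -- representation: any x in B ∈ G lies in some S ∈ F with S ⊆ B
  have rep : ∀ B ∈ G, ∀ x ∈ B, ∃ S ∈ F, S ⊆ B ∧ x ∈ S := by
    intro B hB x hx
    obtain ⟨F', hF', rfl⟩ := (hGmem B).1 hB
    rw [Finset.mem_sup] at hx
    obtain ⟨S, hS, hxS⟩ := hx
    exact ⟨S, hF' hS, Finset.le_sup (f := id) hS, hxS⟩
  -- frequency 1 lemma: the unique member containing y is a subset of any B ∈ G containing y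
  have hfone : ∀ (y : α) (S : Finset α), S ∈ F → y ∈ S →
      (F.filter (fun T => y ∈ T)).card = 1 → ∀ B ∈ G, y ∈ B → S ⊆ B := by
    intro y S hS hyS hcard B hB hyB
    obtain ⟨T, hTF, hTB, hyT⟩ := rep B hB y hyB
    have h1 : T ∈ F.filter (fun T => y ∈ T) := Finset.mem_filter.2 ⟨hTF, hyT⟩
    have h2 : S ∈ F.filter (fun T => y ∈ T) := Finset.mem_filter.2 ⟨hS, hyS⟩
    obtain ⟨c, hc⟩ := Finset.card_eq_one.mp hcard
    rw [hc, Finset.mem_singleton] at h1 h2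
    rw [h2, ← h1]; exact hTB
  -- the key injectivity step
  have key : ∀ B ∈ G, ∀ B' ∈ G, a ∉ B → a ∉ B' → B ∪ A = B' ∪ A → B ⊆ B' := by
    intro B hB B' hB' haB haB' heq x hx
    obtain ⟨S, hSF, hSB, hxS⟩ := rep B hB x hx
    by_cases hSA : (S ∩ A).Nonempty
    · obtain ⟨y, hyS, hy1⟩ := hfreq S hSF hSA
      have hyC : y ∈ B' ∪ A := by
        rw [← heq]; exact Finset.mem_union_left _ (hSB hyS)
      rcases Finset.mem_union.1 hyC with hyB' | hyA
      · exact hfone y S hSF hyS hy1 B' hB' hyB' hxS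
      · exfalso
        have h1 : A ∈ F.filter (fun T => y ∈ T) := Finset.mem_filter.2 ⟨hA, hyA⟩
        have h2 : S ∈ F.filter (fun T => y ∈ T) := Finset.mem_filter.2 ⟨hSF, hyS⟩
        obtain ⟨c, hc⟩ := Finset.card_eq_one.mp hy1
        rw [hc, Finset.mem_singleton] at h1 h2
        have hAS : A = S := by rw [h1, h2]
        exact haB (hSB (hAS ▸ ha))
    · have hSB' : S ⊆ B' := by
        intro z hz
        have : z ∈ B' ∪ A := by
          rw [← heq]; exact Finset.mem_union_left _ (hSB hz)
        rcases Finset.mem_union.1 this with h | h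
        · exact h
        · exact absurd ⟨z, Finset.mem_inter.2 ⟨hz, h⟩⟩ hSA
      exact hSB' hxS
  -- set up the counting
  have hset : {B ∈ genFam F | a ∈ B} = ↑(G.filter (fun B => a ∈ B)) := by
    ext B; simp [hgen]
  rw [hset, hgen, Set.ncard_coe_finset, Set.ncard_coe_finset]
  have hsplit := Finset.card_filter_add_card_filter_not
    (s := G) (p := fun B => a ∈ B)
  have hinj : (G.filter (fun B => ¬ a ∈ B)).card ≤ (G.filter (fun B => a ∈ B)).card := by
    apply Finset.card_le_card_of_injOn (fun B => B ∪ A)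
    · intro B hB
      rw [Finset.mem_coe, Finset.mem_filter] at hB ⊢
      obtain ⟨hBG, haB⟩ := hB
      constructor
      · obtain ⟨F', hF', rfl⟩ := (hGmem _).1 hBG
        apply (hGmem _).2
        refine ⟨insert A F', ?_, ?_⟩
        · intro T hT
          rcases Finset.mem_insert.1 hT with rfl | h
          · exact hA
          · exact hF' h
        · rw [Finset.sup_insert]
          simp [Finset.union_comm]
      · exact Finset.mem_union_right _ ha
    · intro B hB B' hB' heq
      rw [Finset.mem_coe, Finset.mem_filter] at hB hB'
      exact Finset.Subset.antisymm
        (key B hB.1 B' hB'.1 hB.2 hB'.2 heq)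
        (key B' hB'.1 B hB.1 hB'.2 hB.2 heq.symm)
  omega
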